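/- If u is strictly submodular (u_{12} < 0 everywhere), then for 0 ≤ y1 < y2, any maximizer of x ↦ u(x,y2) - kx is strictly smaller than any maximizer of x ↦ u(x,y1) - kx, provided both maximizers are interior (positive). -/

import Mathlib

/-- If u is strictly submodular (u₁ strictly decreasing in y, i.e. u_{12} < 0),
u₁ strictly decreasing in x (strict concavity), and u₁ is the x-partial derivative of u,
then for 0 ≤ y1 < y2, any interior (positive) maximizer of x ↦ u(x,y2) - kx is strictly
smaller than any interior maximizer of x ↦ u(x,y1) - kx. -/
theorem stmt_1 (u u1 : ℝ → ℝ → ℝ) (k : ℝ) (hk : 0 < k)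
    (hderiv : ∀ y x, HasDerivAt (fun t => u t y) (u1 x y) x)
    (h11 : ∀ y, StrictAnti (fun x => u1 x y))
    (h12 : ∀ x, StrictAnti (fun y => u1 x y))
    (y1 y2 : ℝ) (hy1 : 0 ≤ y1) (hy : y1 < y2)
    (x1 x2 : ℝ) (hx1 : 0 < x1) (hx2 : 0 < x2)
    (hmax1 : IsMaxOn (fun x => u x y1 - k * x) (Set.Ici 0) x1)
    (hmax2 : IsMaxOn (fun x => u x y2 - k * x) (Set.Ici 0) x2) :
    x2 < x1 := by
  have key : ∀ (y x : ℝ), 0 < x → IsMaxOn (fun x => u x y - k * x) (Set.Ici 0) x →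
      u1 x y = k := by
    intro y x hx hmax
    have hs : Set.Ici (0:ℝ) ∈ nhds x := Ici_mem_nhds hx
    have hloc : IsLocalMax (fun x => u x y - k * x) x := hmax.isLocalMax hs
    have hd : HasDerivAt (fun x => u x y - k * x) (u1 x y - k) x :=
      ((hderiv y x).sub ((hasDerivAt_id x).const_mul k)).congr_deriv (by ring)
    have := hloc.hasDerivAt_eq_zero hd
    linarith
  have e1 : u1 x1 y1 = k := key y1 x1 hx1 hmax1
  have e2 : u1 x2 y2 = k := key y2 x2 hx2 hmax2
  have h : u1 x2 y2 < u1 x2 y1 := h12 x2 hy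
  have : u1 x1 y1 < u1 x2 y1 := by rw [e1, ← e2]; exact h
  by_contra hc; push_neg at hc; exact absurd this (not_lt.mpr ((h11 y1).antitone hc))
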